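/- arXiv:1202.1232 — 3 statements merged into one kernel-verified Lean document; each statement's English description precedes it below -/
import Mathlib

section
/- The key cancellation for the conservative discretization of the nonlinearity: for real square-summable grid functions $u$ with $u^k$ and $u^{k+1}$ square-summable, $(u^k D_0 u, u)_h + (D_0 u^{k+1}, u)_h = 0$, where $u^k$ denotes the pointwise power, $D_0 w_j = \frac{1}{2h}(w_{j+1}-w_{j-1})$, and $(z,w)_h = \sum_j h z_j w_j$. -/
lemma bound_aux (x y M : ℝ) (k : ℕ) (hx : |x| ≤ M) :
    |x ^ (k + 1) * y| ≤ M ^ k * ((x ^ 2 + y ^ 2) / 2) := by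
  have h1 : |x ^ (k + 1) * y| = |x| ^ k * (|x| * |y|) := by
    rw [abs_mul, abs_pow, pow_succ]; ring
  rw [h1]
  have h2 : |x| ^ k ≤ M ^ k := pow_le_pow_left₀ (abs_nonneg _) hx k
  have h3 : |x| * |y| ≤ (x ^ 2 + y ^ 2) / 2 := by
    nlinarith [sq_nonneg (|x| - |y|), sq_abs x, sq_abs y]
  have hM0 : 0 ≤ M := le_trans (abs_nonneg x) hx
  exact mul_le_mul h2 h3 (by positivity) (pow_nonneg hM0 k)

lemma sum_aux (v w : ℤ → ℝ) (hv : Summable fun j => v j ^ 2)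
    (hw : Summable fun j => w j ^ 2) (M : ℝ) (hM : ∀ j, |v j| ≤ M) (k : ℕ) :
    Summable fun j => v j ^ (k + 1) * w j := by
  have hMs : Summable fun j => M ^ k * ((v j ^ 2 + w j ^ 2) / 2) :=
    (((hv.add hw).div_const 2).mul_left _)
  refine Summable.of_abs (hMs.of_nonneg_of_le (fun j => abs_nonneg _) fun j => ?_)
  exact bound_aux _ _ _ _ (hM j)

/-- The key cancellation for the conservative discretization of the nonlinearity:
`(uᵏ D₀ u, u)ₕ + (D₀ u^{k+1}, u)ₕ = 0`. -/
theorem nonlinear_term_cancellation (h : ℝ) (hh : 0 < h) (k : ℕ) (hk : 1 ≤ k)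
    (u : ℤ → ℝ) (hu : Summable fun j => (u j) ^ 2) (hb : ∃ M, ∀ j, |u j| ≤ M) :
    (∑' j : ℤ, h * ((u j) ^ k * ((u (j + 1) - u (j - 1)) / (2 * h))) * u j) +
      (∑' j : ℤ, h * (((u (j + 1)) ^ (k + 1) - (u (j - 1)) ^ (k + 1)) / (2 * h)) * u j) = 0 := by
  obtain ⟨M, hM⟩ := hb
  set a : ℤ → ℝ := fun j => u j ^ (k + 1) * u (j + 1) with ha_def
  set b : ℤ → ℝ := fun j => u j ^ (k + 1) * u (j - 1) with hb_def
  set a' : ℤ → ℝ := fun j => u (j + 1) ^ (k + 1) * u j with ha'_def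
  set b' : ℤ → ℝ := fun j => u (j - 1) ^ (k + 1) * u j with hb'_def
  -- shifted summability of squares
  have hu1 : Summable fun j : ℤ => u (j + 1) ^ 2 :=
    hu.comp_injective (add_left_injective (1 : ℤ))
  have hum1 : Summable fun j : ℤ => u (j - 1) ^ 2 := by
    simpa [sub_eq_add_neg, Function.comp_def] using hu.comp_injective (add_left_injective (-1 : ℤ))
  have hM1 : ∀ j : ℤ, |u (j + 1)| ≤ M := fun j => hM _
  have hMm1 : ∀ j : ℤ, |u (j - 1)| ≤ M := fun j => hM _
  have hsa : Summable a := sum_aux u (fun j => u (j + 1)) hu hu1 M hM k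
  have hsb : Summable b := sum_aux u (fun j => u (j - 1)) hu hum1 M hM k
  have hsa' : Summable a' := sum_aux (fun j => u (j + 1)) u hu1 hu M hM1 k
  have hsb' : Summable b' := sum_aux (fun j => u (j - 1)) u hum1 hu M hMm1 k
  have hne : h ≠ 0 := ne_of_gt hh
  have e1 : (fun j : ℤ => h * ((u j) ^ k * ((u (j + 1) - u (j - 1)) / (2 * h))) * u j)
      = fun j => (a j - b j) / 2 := by
    funext j
    simp only [ha_def, hb_def, pow_succ]
    field_simp
  have e2 : (fun j : ℤ => h * (((u (j + 1)) ^ (k + 1) - (u (j - 1)) ^ (k + 1)) / (2 * h)) * u j)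
      = fun j => (a' j - b' j) / 2 := by
    funext j
    simp only [ha'_def, hb'_def]
    field_simp
  rw [e1, e2]
  have hba' : ∑' j : ℤ, b j = ∑' j : ℤ, a' j := by
    rw [← (Equiv.subRight (1 : ℤ)).tsum_eq a']
    refine tsum_congr fun j => ?_
    simp [ha'_def, hb_def, sub_add_cancel]
  have hb'a : ∑' j : ℤ, b' j = ∑' j : ℤ, a j := by
    rw [← (Equiv.subRight (1 : ℤ)).tsum_eq a]
    refine tsum_congr fun j => ?_
    simp [ha_def, hb'_def, sub_add_cancel]
  rw [tsum_div_const, tsum_div_const, Summable.tsum_sub hsa hsb, Summable.tsum_sub hsa' hsb', hba', hb'a]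
  ring
end

section
/- Discrete Gagliardo–Nirenberg-type inequality: there exists a constant $C > 0$ independent of $h$ such that for every $h>0$ and every real square-summable grid function $\phi$ with $D_+\phi$ square-summable, $\sup_j |\phi_j| \leq C\, \|\phi\|_{2,h}^{1/2} \|D_+\phi\|_{2,h}^{1/2}$, where $\|z\|_{2,h}^2 = \sum_j h|z_j|^2$ and $D_+\phi_j = (\phi_{j+1}-\phi_j)/h$. -/
open Finset in
lemma aux_shift_sum_le_tsum (g : ℤ → ℝ) (hg : Summable g) (hgn : ∀ i, 0 ≤ g i)
    (j c : ℤ) (n : ℕ) : ∑ k ∈ Finset.range n, g (j + k + c) ≤ ∑' i, g i := by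
  have hinj : Function.Injective (fun k : ℕ => j + (k : ℤ) + c) := by
    intro a b hab; simpa using hab
  calc ∑ k ∈ Finset.range n, g (j + k + c)
      ≤ ∑' k : ℕ, g (j + k + c) :=
        Summable.sum_le_tsum _ (fun k _ => hgn _) (hg.comp_injective hinj)
    _ ≤ ∑' i, g i :=
        Summable.tsum_le_tsum_of_inj _ hinj (fun c _ => hgn c) (fun i => le_rfl)
          (hg.comp_injective hinj) hg

/-- Discrete Gagliardo–Nirenberg-type inequality, with constant independent of `h`:
`‖φ‖_∞ ≤ C ‖φ‖_{2,h}^{1/2} ‖D₊φ‖_{2,h}^{1/2}`. -/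
theorem discrete_gagliardo_nirenberg :
    ∃ C : ℝ, 0 < C ∧ ∀ (h : ℝ), 0 < h → ∀ φ : ℤ → ℝ,
      (Summable fun j => (φ j) ^ 2) →
      (Summable fun j => ((φ (j + 1) - φ j) / h) ^ 2) →
      ∀ j : ℤ, |φ j| ≤
        C * (Real.sqrt (∑' i : ℤ, h * (φ i) ^ 2)) ^ ((1 : ℝ) / 2) *
          (Real.sqrt (∑' i : ℤ, h * ((φ (i + 1) - φ i) / h) ^ 2)) ^ ((1 : ℝ) / 2) := by
  refine ⟨2, by norm_num, ?_⟩
  intro h hh φ hφ hD j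
  have hne : h ≠ 0 := ne_of_gt hh
  set S1 : ℝ := ∑' i : ℤ, (φ i) ^ 2 with hS1def
  have hΔsum : Summable fun i : ℤ => (φ (i + 1) - φ i) ^ 2 := by
    have h2 := hD.mul_left (h ^ 2)
    refine h2.congr fun i => ?_
    field_simp
  set S2 : ℝ := ∑' i : ℤ, (φ (i + 1) - φ i) ^ 2 with hS2def
  have hS1nn : 0 ≤ S1 := tsum_nonneg fun i => sq_nonneg _
  have hS2nn : 0 ≤ S2 := tsum_nonneg fun i => sq_nonneg _
  -- key pointwise bound for each n
  have key : ∀ n : ℕ, (φ j) ^ 2 ≤ (φ (j + n)) ^ 2 + 2 * (Real.sqrt S2 * Real.sqrt S1) := by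
    intro n
    have tele : (φ j) ^ 2 - (φ (j + n)) ^ 2
        = ∑ k ∈ Finset.range n, ((φ (j + (k : ℤ))) ^ 2 - (φ (j + ((k : ℤ) + 1))) ^ 2) := by
      have ht := Finset.sum_range_sub' (fun k : ℕ => (φ (j + k)) ^ 2) n
      push_cast at ht
      simpa using ht.symm
    have step : ∀ k : ℕ, (φ (j + (k : ℤ))) ^ 2 - (φ (j + ((k : ℤ) + 1))) ^ 2
        ≤ |φ (j + k + 1) - φ (j + k)| * |φ (j + k + 1)|
          + |φ (j + k + 1) - φ (j + k)| * |φ (j + k)| := by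
      intro k
      rw [show (j + ((k : ℤ) + 1)) = j + k + 1 by ring]
      have : (φ (j + k)) ^ 2 - (φ (j + k + 1)) ^ 2
          = -((φ (j + k + 1) - φ (j + k)) * (φ (j + k + 1) + φ (j + k))) := by ring
      rw [this]
      calc -((φ (j + k + 1) - φ (j + k)) * (φ (j + k + 1) + φ (j + k)))
          ≤ |(φ (j + k + 1) - φ (j + k)) * (φ (j + k + 1) + φ (j + k))| := neg_le_abs _
        _ = |φ (j + k + 1) - φ (j + k)| * |φ (j + k + 1) + φ (j + k)| := abs_mul _ _
        _ ≤ |φ (j + k + 1) - φ (j + k)| * (|φ (j + k + 1)| + |φ (j + k)|) := by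
            gcongr; exact abs_add_le _ _
        _ = _ := by ring
    -- Cauchy–Schwarz bounds
    have csbound : ∀ c : ℤ,
        ∑ k ∈ Finset.range n, |φ (j + k + 1) - φ (j + k)| * |φ (j + k + c)|
          ≤ Real.sqrt S2 * Real.sqrt S1 := by
      intro c
      calc ∑ k ∈ Finset.range n, |φ (j + k + 1) - φ (j + k)| * |φ (j + k + c)|
          ≤ Real.sqrt (∑ k ∈ Finset.range n, |φ (j + k + 1) - φ (j + k)| ^ 2)
            * Real.sqrt (∑ k ∈ Finset.range n, |φ (j + k + c)| ^ 2) :=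
            Real.sum_mul_le_sqrt_mul_sqrt _ _ _
        _ ≤ Real.sqrt S2 * Real.sqrt S1 := by
            gcongr
            · simp only [sq_abs]
              have := aux_shift_sum_le_tsum (fun i => (φ (i + 1) - φ i) ^ 2) hΔsum
                (fun i => sq_nonneg _) j 0 n
              simpa using this
            · simp only [sq_abs]
              exact aux_shift_sum_le_tsum (fun i => (φ i) ^ 2) hφ
                (fun i => sq_nonneg _) j c n
    have : (φ j) ^ 2 - (φ (j + n)) ^ 2 ≤ 2 * (Real.sqrt S2 * Real.sqrt S1) := by
      rw [tele]
      calc ∑ k ∈ Finset.range n, ((φ (j + (k : ℤ))) ^ 2 - (φ (j + ((k : ℤ) + 1))) ^ 2)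
          ≤ ∑ k ∈ Finset.range n, (|φ (j + k + 1) - φ (j + k)| * |φ (j + k + 1)|
            + |φ (j + k + 1) - φ (j + k)| * |φ (j + k)|) :=
            Finset.sum_le_sum fun k _ => step k
        _ = (∑ k ∈ Finset.range n, |φ (j + k + 1) - φ (j + k)| * |φ (j + k + 1)|)
            + ∑ k ∈ Finset.range n, |φ (j + k + 1) - φ (j + k)| * |φ (j + k)| :=
            Finset.sum_add_distrib
        _ ≤ Real.sqrt S2 * Real.sqrt S1 + Real.sqrt S2 * Real.sqrt S1 := by
            have h1 := csbound 1
            have h0 := csbound 0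
            simp only [add_zero] at h0
            exact add_le_add h1 h0
        _ = 2 * (Real.sqrt S2 * Real.sqrt S1) := by ring
    linarith
  -- take n → ∞
  have hlim : Filter.Tendsto (fun n : ℕ => (φ (j + n)) ^ 2
      + 2 * (Real.sqrt S2 * Real.sqrt S1)) Filter.atTop
      (nhds (0 + 2 * (Real.sqrt S2 * Real.sqrt S1))) := by
    apply Filter.Tendsto.add _ tendsto_const_nhds
    have h1 : Filter.Tendsto (fun i : ℤ => (φ i) ^ 2) Filter.cofinite (nhds 0) :=
      hφ.tendsto_cofinite_zero
    have hinj : Function.Injective (fun n : ℕ => j + (n : ℤ)) := by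
      intro a b hab; simpa using hab
    have h2 : Filter.Tendsto (fun n : ℕ => j + (n : ℤ)) Filter.cofinite Filter.cofinite :=
      hinj.tendsto_cofinite
    rw [Nat.cofinite_eq_atTop] at h2
    exact h1.comp h2
  have keylim : (φ j) ^ 2 ≤ 2 * (Real.sqrt S2 * Real.sqrt S1) := by
    have := ge_of_tendsto' hlim key
    simpa using this
  -- rewrite the RHS
  have e1 : (∑' i : ℤ, h * (φ i) ^ 2) = h * S1 := tsum_mul_left
  have e2 : (∑' i : ℤ, h * ((φ (i + 1) - φ i) / h) ^ 2) = (1 / h) * S2 := by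
    rw [← tsum_mul_left]
    congr 1; funext i; field_simp
  rw [e1, e2]
  have hs2 : ∀ x : ℝ, 0 ≤ x → (Real.sqrt x) ^ ((1 : ℝ) / 2) = Real.sqrt (Real.sqrt x) := by
    intro x hx
    rw [Real.sqrt_eq_rpow (Real.sqrt x)]
  rw [hs2 _ (by positivity), hs2 _ (by positivity)]
  have eq3 : Real.sqrt (Real.sqrt (h * S1)) * Real.sqrt (Real.sqrt (1 / h * S2))
      = Real.sqrt (Real.sqrt (S1 * S2)) := by
    rw [← Real.sqrt_mul (Real.sqrt_nonneg _), ← Real.sqrt_mul (by positivity)]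
    congr 2
    field_simp
  rw [mul_assoc, eq3]
  -- final: |φ j| ≤ 2 * √√(S1*S2)
  have h4 : |φ j| = Real.sqrt ((φ j) ^ 2) := (Real.sqrt_sq_eq_abs _).symm
  rw [h4]
  calc Real.sqrt ((φ j) ^ 2) ≤ Real.sqrt (2 * (Real.sqrt S2 * Real.sqrt S1)) :=
        Real.sqrt_le_sqrt keylim
    _ = Real.sqrt 2 * Real.sqrt (Real.sqrt (S1 * S2)) := by
        rw [Real.sqrt_mul (by norm_num : (0:ℝ) ≤ 2), ← Real.sqrt_mul hS2nn,
          mul_comm S2 S1]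
    _ ≤ 2 * Real.sqrt (Real.sqrt (S1 * S2)) := by
        have h2 : Real.sqrt 2 ≤ 2 := by
          nlinarith [Real.sq_sqrt (by norm_num : (0:ℝ) ≤ 2), Real.sqrt_nonneg 2]
        gcongr
end

section
/- For the third difference operator $D^3 = D_+ D_0 D_-$ and a real square-summable grid function $u$ with square-summable differences, the identity $(D^3 u, p u)_h = A + B$ holds with the explicit decomposition $(D^3 u, pu)_h = \frac{h}{2}(D_+D_- u, D_+ p\, D_- u)_h + (D_- u, D_+ p\, D_- u)_h + (D_- u, u_- D_0 D_- p)_h + \frac{1}{2}(D_+ u, D_- p\, D_+ u)_h - \frac{h}{2}(D_+ u, D_- p\, D_+ D_- u)_h$, for any bounded grid function $p$ with bounded differences. -/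
noncomputable def gfun (u p : ℤ → ℝ) (a b c : ℤ) : ℤ → ℝ :=
  fun j => u (j + a) * u (j + b) * p (j + c)

noncomputable def Tg (u p : ℤ → ℝ) (d e : ℤ) : ℝ :=
  ∑' j : ℤ, u (j + d) * u j * p (j + e)

lemma summable_sq_shift (u : ℤ → ℝ) (hu : Summable fun j => (u j)^2) (a : ℤ) :
    Summable fun j => (u (j + a))^2 :=
  hu.comp_injective (add_left_injective a)

lemma summable_g (u p : ℤ → ℝ) (hu : Summable fun j => (u j)^2)
    (M : ℝ) (hM : ∀ j, |p j| ≤ M) (a b c : ℤ) :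
    Summable (gfun u p a b c) := by
  have h1 := summable_sq_shift u hu a
  have h2 := summable_sq_shift u hu b
  apply Summable.of_abs
  apply Summable.of_nonneg_of_le (fun j => abs_nonneg _) (fun j => ?_)
    ((h1.add h2).mul_left (M/2))
  have hMj := hM (j + c)
  have h3 : |gfun u p a b c j| = |u (j+a)| * |u (j+b)| * |p (j+c)| := by
    rw [gfun]; rw [abs_mul, abs_mul]
  rw [h3]
  have ha := abs_nonneg (u (j+a)); have hb := abs_nonneg (u (j+b))
  have hpc := abs_nonneg (p (j+c))
  nlinarith [sq_abs (u (j+a)), sq_abs (u (j+b)), sq_nonneg (|u (j+a)| - |u (j+b)|),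
    mul_le_mul_of_nonneg_left hMj (mul_nonneg ha hb)]

lemma g_tsum (u p : ℤ → ℝ) (a b c : ℤ) :
    ∑' j, gfun u p a b c j = Tg u p (a-b) (c-b) := by
  have e := Equiv.tsum_eq (Equiv.addRight b) (fun j => u (j + (a-b)) * u j * p (j + (c-b)))
  rw [Tg, ← e]
  apply tsum_congr; intro j
  simp only [gfun, Equiv.coe_addRight]
  rw [show j + b + (a-b) = j + a by ring, show j + b + (c-b) = j + c by ring]

lemma Tg_neg (u p : ℤ → ℝ) (d e : ℤ) : Tg u p d e = Tg u p (-d) (e-d) := by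
  have h1 : Tg u p d e = ∑' j, gfun u p 0 d e j := by
    rw [Tg]; apply tsum_congr; intro j
    simp only [gfun, add_zero]; ring
  rw [h1, g_tsum]
  norm_num

noncomputable def combF (u p : ℤ → ℝ) (l : List (ℝ × ℤ × ℤ × ℤ)) : ℤ → ℝ :=
  fun j => (l.map (fun q => q.1 * gfun u p q.2.1 q.2.2.1 q.2.2.2 j)).sum

lemma summable_combF (u p : ℤ → ℝ) (hu : Summable fun j => (u j)^2)
    (M : ℝ) (hM : ∀ j, |p j| ≤ M) (l : List (ℝ × ℤ × ℤ × ℤ)) :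
    Summable (combF u p l) := by
  induction l with
  | nil => exact (summable_zero : Summable (fun _ : ℤ => (0:ℝ)))
  | cons q t ih =>
      have e : combF u p (q :: t) = fun j =>
          q.1 * gfun u p q.2.1 q.2.2.1 q.2.2.2 j + combF u p t j := by
        funext j; simp [combF]
      rw [e]
      exact ((summable_g u p hu M hM _ _ _).mul_left _).add ih

lemma tsum_combF (u p : ℤ → ℝ) (hu : Summable fun j => (u j)^2)
    (M : ℝ) (hM : ∀ j, |p j| ≤ M) (l : List (ℝ × ℤ × ℤ × ℤ)) :
    ∑' j, combF u p l j
      = (l.map (fun q => q.1 * Tg u p (q.2.1 - q.2.2.1) (q.2.2.2 - q.2.2.1))).sum := by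
  induction l with
  | nil => simp [combF]
  | cons q t ih =>
      have e : combF u p (q :: t) = fun j =>
          q.1 * gfun u p q.2.1 q.2.2.1 q.2.2.2 j + combF u p t j := by
        funext j; simp [combF]
      rw [e, Summable.tsum_add (((summable_g u p hu M hM _ _ _).mul_left _))
        (summable_combF u p hu M hM t), tsum_mul_left, g_tsum, ih]
      simp


set_option maxHeartbeats 4000000

/-- The weighted identity for the third difference operator `D³ = D₊D₀D₋`:
`(D³u, pu)ₕ = (h/2)(D₊D₋u, D₊p D₋u)ₕ + (D₋u, D₊p D₋u)ₕ + (D₋u, u₋ D₀D₋p)ₕ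
  + (1/2)(D₊u, D₋p D₊u)ₕ - (h/2)(D₊u, D₋p D₊D₋u)ₕ`. -/
theorem third_difference_weighted_identity (h : ℝ) (hh : 0 < h)
    (Dp : (ℤ → ℝ) → ℤ → ℝ) (hDp : Dp = fun w j => (w (j + 1) - w j) / h)
    (Dm : (ℤ → ℝ) → ℤ → ℝ) (hDm : Dm = fun w j => (w j - w (j - 1)) / h)
    (D0 : (ℤ → ℝ) → ℤ → ℝ) (hD0 : D0 = fun w j => (w (j + 1) - w (j - 1)) / (2 * h))
    (u p : ℤ → ℝ)
    (hu : Summable fun j => (u j) ^ 2)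
    (hp : ∃ M, ∀ j, |p j| ≤ M)
    (hp' : ∃ M, ∀ j, |Dp p j| ≤ M ∧ |Dm p j| ≤ M) :
    (∑' j : ℤ, h * Dp (D0 (Dm u)) j * (p j * u j)) =
      (h / 2) * (∑' j : ℤ, h * Dp (Dm u) j * (Dp p j * Dm u j)) +
      (∑' j : ℤ, h * Dm u j * (Dp p j * Dm u j)) +
      (∑' j : ℤ, h * Dm u j * (u (j - 1) * D0 (Dm p) j)) +
      (1 / 2) * (∑' j : ℤ, h * Dp u j * (Dm p j * Dp u j)) -
      (h / 2) * (∑' j : ℤ, h * Dp u j * (Dm p j * Dp (Dm u) j)) := by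
  obtain ⟨M, hM⟩ := hp
  have hne : h ≠ 0 := ne_of_gt hh
  have H0 : (∑' j : ℤ, h * Dp (D0 (Dm u)) j * (p j * u j)) = ∑' j, combF u p [(((1/(2*h^2)) : ℝ), (2 : ℤ), (0 : ℤ), (0 : ℤ)), (((-(1/h^2)) : ℝ), (1 : ℤ), (0 : ℤ), (0 : ℤ)), (((1/h^2) : ℝ), (-1 : ℤ), (0 : ℤ), (0 : ℤ)), (((-(1/(2*h^2))) : ℝ), (-2 : ℤ), (0 : ℤ), (0 : ℤ))] j := by
    apply tsum_congr; intro j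
    simp only [hDp, hDm, hD0, combF, gfun, List.map_cons, List.map_nil, List.sum_cons, List.sum_nil]
    field_simp
    ring_nf
  have H1 : (∑' j : ℤ, h * Dp (Dm u) j * (Dp p j * Dm u j)) = ∑' j, combF u p [(((1/h^3) : ℝ), (1 : ℤ), (0 : ℤ), (1 : ℤ)), (((-(1/h^3)) : ℝ), (1 : ℤ), (-1 : ℤ), (1 : ℤ)), (((2*(-(1/h^3))) : ℝ), (0 : ℤ), (0 : ℤ), (1 : ℤ)), (((3*(1/h^3)) : ℝ), (0 : ℤ), (-1 : ℤ), (1 : ℤ)), (((-(1/h^3)) : ℝ), (-1 : ℤ), (-1 : ℤ), (1 : ℤ)), (((-(1/h^3)) : ℝ), (1 : ℤ), (0 : ℤ), (0 : ℤ)), (((1/h^3) : ℝ), (1 : ℤ), (-1 : ℤ), (0 : ℤ)), (((2*(1/h^3)) : ℝ), (0 : ℤ), (0 : ℤ), (0 : ℤ)), (((3*(-(1/h^3))) : ℝ), (0 : ℤ), (-1 : ℤ), (0 : ℤ)), (((1/h^3) : ℝ), (-1 : ℤ), (-1 : ℤ), (0 : ℤ))] j := by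
    apply tsum_congr; intro j
    simp only [hDp, hDm, hD0, combF, gfun, List.map_cons, List.map_nil, List.sum_cons, List.sum_nil]
    field_simp
    ring_nf
  have H2 : (∑' j : ℤ, h * Dm u j * (Dp p j * Dm u j)) = ∑' j, combF u p [(((1/h^2) : ℝ), (0 : ℤ), (0 : ℤ), (1 : ℤ)), (((2*(-(1/h^2))) : ℝ), (0 : ℤ), (-1 : ℤ), (1 : ℤ)), (((1/h^2) : ℝ), (-1 : ℤ), (-1 : ℤ), (1 : ℤ)), (((-(1/h^2)) : ℝ), (0 : ℤ), (0 : ℤ), (0 : ℤ)), (((2*(1/h^2)) : ℝ), (0 : ℤ), (-1 : ℤ), (0 : ℤ)), (((-(1/h^2)) : ℝ), (-1 : ℤ), (-1 : ℤ), (0 : ℤ))] j := by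
    apply tsum_congr; intro j
    simp only [hDp, hDm, hD0, combF, gfun, List.map_cons, List.map_nil, List.sum_cons, List.sum_nil]
    field_simp
    ring_nf
  have H3 : (∑' j : ℤ, h * Dm u j * (u (j - 1) * D0 (Dm p) j)) = ∑' j, combF u p [(((1/(2*h^2)) : ℝ), (0 : ℤ), (-1 : ℤ), (1 : ℤ)), (((-(1/(2*h^2))) : ℝ), (-1 : ℤ), (-1 : ℤ), (1 : ℤ)), (((-(1/(2*h^2))) : ℝ), (0 : ℤ), (-1 : ℤ), (0 : ℤ)), (((1/(2*h^2)) : ℝ), (-1 : ℤ), (-1 : ℤ), (0 : ℤ)), (((-(1/(2*h^2))) : ℝ), (0 : ℤ), (-1 : ℤ), (-1 : ℤ)), (((1/(2*h^2)) : ℝ), (-1 : ℤ), (-1 : ℤ), (-1 : ℤ)), (((1/(2*h^2)) : ℝ), (0 : ℤ), (-1 : ℤ), (-2 : ℤ)), (((-(1/(2*h^2))) : ℝ), (-1 : ℤ), (-1 : ℤ), (-2 : ℤ))] j := by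
    apply tsum_congr; intro j
    simp only [hDp, hDm, hD0, combF, gfun, List.map_cons, List.map_nil, List.sum_cons, List.sum_nil]
    field_simp
    ring_nf
  have H4 : (∑' j : ℤ, h * Dp u j * (Dm p j * Dp u j)) = ∑' j, combF u p [(((1/h^2) : ℝ), (1 : ℤ), (1 : ℤ), (0 : ℤ)), (((2*(-(1/h^2))) : ℝ), (1 : ℤ), (0 : ℤ), (0 : ℤ)), (((1/h^2) : ℝ), (0 : ℤ), (0 : ℤ), (0 : ℤ)), (((-(1/h^2)) : ℝ), (1 : ℤ), (1 : ℤ), (-1 : ℤ)), (((2*(1/h^2)) : ℝ), (1 : ℤ), (0 : ℤ), (-1 : ℤ)), (((-(1/h^2)) : ℝ), (0 : ℤ), (0 : ℤ), (-1 : ℤ))] j := by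
    apply tsum_congr; intro j
    simp only [hDp, hDm, hD0, combF, gfun, List.map_cons, List.map_nil, List.sum_cons, List.sum_nil]
    field_simp
    ring_nf
  have H5 : (∑' j : ℤ, h * Dp u j * (Dm p j * Dp (Dm u) j)) = ∑' j, combF u p [(((1/h^3) : ℝ), (1 : ℤ), (1 : ℤ), (0 : ℤ)), (((3*(-(1/h^3))) : ℝ), (1 : ℤ), (0 : ℤ), (0 : ℤ)), (((1/h^3) : ℝ), (1 : ℤ), (-1 : ℤ), (0 : ℤ)), (((2*(1/h^3)) : ℝ), (0 : ℤ), (0 : ℤ), (0 : ℤ)), (((-(1/h^3)) : ℝ), (0 : ℤ), (-1 : ℤ), (0 : ℤ)), (((-(1/h^3)) : ℝ), (1 : ℤ), (1 : ℤ), (-1 : ℤ)), (((3*(1/h^3)) : ℝ), (1 : ℤ), (0 : ℤ), (-1 : ℤ)), (((-(1/h^3)) : ℝ), (1 : ℤ), (-1 : ℤ), (-1 : ℤ)), (((2*(-(1/h^3))) : ℝ), (0 : ℤ), (0 : ℤ), (-1 : ℤ)), (((1/h^3) : ℝ), (0 : ℤ), (-1 : ℤ), (-1 : ℤ))] j :=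 by
    apply tsum_congr; intro j
    simp only [hDp, hDm, hD0, combF, gfun, List.map_cons, List.map_nil, List.sum_cons, List.sum_nil]
    field_simp
    ring_nf
  rw [H0, H1, H2, H3, H4, H5]
  rw [tsum_combF u p hu M hM, tsum_combF u p hu M hM, tsum_combF u p hu M hM,
    tsum_combF u p hu M hM, tsum_combF u p hu M hM, tsum_combF u p hu M hM]
  simp only [List.map_cons, List.map_nil, List.sum_cons, List.sum_nil]
  norm_num
  rw [show Tg u p (-1) 0 = Tg u p 1 1 by rw [Tg_neg]; norm_num,
    show Tg u p (-2) 0 = Tg u p 2 2 by rw [Tg_neg]; norm_num]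
  field_simp
  ring
end
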